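/- Let a < b < n be coprime positive integers with n large enough that (3b−a)/(2n) ≤ L_n, where L_n = (n+ab)/(2(an+bn+ab)). If μ_{a,b}(t1,t2) ≤ 1/(a+b) − L_n, then μ_{a,b,n}(t1,t2,t3) ≤ L_n for all real t3. -/

import Mathlib

/-- Distance from a real number to the nearest integer. -/
noncomputable def dni (u : ℝ) : ℝ := |u - round u|

/-- Approximation cost of `(t1, t2)` relative to the two-element set `{a, b}`. -/
noncomputable def mu2 (a b : ℕ) (t1 t2 : ℝ) : ℝ :=
  ⨅ x : ℝ, max (dni (t1 - x * a)) (dni (t2 - x * b))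

/-- Approximation cost of `(t1, t2, t3)` relative to the set `{a, b, n}`. -/
noncomputable def mu3 (a b n : ℕ) (t1 t2 t3 : ℝ) : ℝ :=
  ⨅ x : ℝ, max (dni (t1 - x * a)) (max (dni (t2 - x * b)) (dni (t3 - x * n)))

/-- Angular Kronecker constant of `{a, b, n}`. -/
noncomputable def alpha3 (a b n : ℕ) : ℝ :=
  sSup {v : ℝ | ∃ t1 t2 t3 : ℝ, v = mu3 a b n t1 t2 t3}

/-- Binary Kronecker constant of `{a, b, n}`. -/
noncomputable def beta3 (a b n : ℕ) : ℝ :=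
  sSup {v : ℝ | ∃ t1 t2 t3 : ℝ, t1 ∈ ({0, 1/2} : Set ℝ) ∧ t2 ∈ ({0, 1/2} : Set ℝ) ∧
    t3 ∈ ({0, 1/2} : Set ℝ) ∧ v = mu3 a b n t1 t2 t3}

lemma dni_nonneg (u : ℝ) : 0 ≤ dni u := abs_nonneg _

lemma dni_le_abs_sub_int (u : ℝ) (m : ℤ) : dni u ≤ |u - m| := by
  rcases eq_or_ne (round u) m with h | h
  · rw [dni, h]
  · have h1 : |u - round u| ≤ 1 / 2 := abs_sub_round u
    have h2 : (1 : ℝ) ≤ |(round u : ℝ) - m| := by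
      have h0 : (1 : ℤ) ≤ |round u - m| := Int.one_le_abs (sub_ne_zero.2 h)
      have : ((1 : ℤ) : ℝ) ≤ ((|round u - m| : ℤ) : ℝ) := by exact_mod_cast h0
      simpa [Int.cast_abs] using this
    have h3 : |(round u : ℝ) - m| ≤ |(round u : ℝ) - u| + |u - m| := abs_sub_le _ _ _
    have h4 : |(round u : ℝ) - u| = |u - round u| := abs_sub_comm _ _
    rw [dni]; linarith

lemma dni_le_abs (u : ℝ) : dni u ≤ |u| := by simpa using dni_le_abs_sub_int u 0

lemma dni_add_int (u : ℝ) (k : ℤ) : dni (u + k) = dni u := by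
  rw [dni, dni, round_add_intCast]
  congr 1
  push_cast
  ring

lemma dni_neg (u : ℝ) : dni (-u) = dni u := by
  apply le_antisymm
  · calc dni (-u) ≤ |(-u) - ((-round u : ℤ) : ℝ)| := dni_le_abs_sub_int _ _
      _ = |u - round u| := by
          push_cast
          rw [show -u - -(round u : ℝ) = -(u - round u) by ring, abs_neg]
      _ = dni u := rfl
  · calc dni u ≤ |u - ((-round (-u) : ℤ) : ℝ)| := dni_le_abs_sub_int _ _
      _ = |(-u) - round (-u)| := by
          push_cast
          rw [show u - -(round (-u) : ℝ) = -(-u - round (-u)) by ring, abs_neg]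
      _ = dni (-u) := rfl

lemma dni_lip (u v : ℝ) : dni u ≤ dni v + |u - v| := by
  calc dni u ≤ |u - round v| := dni_le_abs_sub_int _ _
    _ ≤ |u - v| + |v - round v| := abs_sub_le _ _ _
    _ = dni v + |u - v| := by rw [dni]; ring

lemma exists_s (N L p q w : ℝ) (hN : 0 < N) (hL : 0 ≤ L)
    (hpq0 : -p ≤ q) (hpq : 1 - 2 * L ≤ (p + q) * N) :
    ∃ s : ℝ, -p ≤ s ∧ s ≤ q ∧ dni (w - s * N) ≤ L := by
  set u' := w - round w with hu'
  set k : ℤ := round ((q - p) / 2 * N - u') with hk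
  set s0 : ℝ := (u' + k) / N with hs0
  set s : ℝ := min q (max (-p) s0) with hs
  have hsp : -p ≤ s := le_min hpq0 (le_max_left _ _)
  have hsq : s ≤ q := min_le_left _ _
  refine ⟨s, hsp, hsq, ?_⟩
  have hmid : |(q - p) / 2 - s0| * N ≤ 1 / 2 := by
    have h := abs_sub_round ((q - p) / 2 * N - u')
    calc |(q - p) / 2 - s0| * N = |((q - p) / 2 - s0) * N| := by
          rw [abs_mul, abs_of_pos hN]
      _ = |(q - p) / 2 * N - u' - k| := by
          congr 1; rw [hs0]; field_simp; ring
      _ ≤ 1 / 2 := h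
  have key : ∀ t : ℝ, dni (w - t * N) ≤ |s0 - t| * N := by
    intro t
    have hrw : w - t * N = (s0 - t) * N + ((round w - k : ℤ) : ℝ) := by
      push_cast
      rw [hs0, hu']
      field_simp
      ring
    rw [hrw, dni_add_int]
    calc dni ((s0 - t) * N) ≤ |(s0 - t) * N| := dni_le_abs _
      _ = |s0 - t| * N := by rw [abs_mul, abs_of_pos hN]
  have hm1 : ((q - p) / 2 - s0) * N ≤ 1 / 2 :=
    le_trans (mul_le_mul_of_nonneg_right (le_abs_self _) hN.le) hmid
  have hm2 : (s0 - (q - p) / 2) * N ≤ 1 / 2 := by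
    have h' : s0 - (q - p) / 2 ≤ |(q - p) / 2 - s0| := by
      rw [abs_sub_comm]; exact le_abs_self _
    exact le_trans (mul_le_mul_of_nonneg_right h' hN.le) hmid
  rcases le_or_gt s0 q with h1 | h1
  · rcases le_or_gt (-p) s0 with h2 | h2
    · have hss : s = s0 := by rw [hs, max_eq_right h2, min_eq_right h1]
      rw [hss]
      have := key s0
      simp only [sub_self, abs_zero, zero_mul] at this
      linarith
    · have hss : s = -p := by rw [hs, max_eq_left h2.le, min_eq_right hpq0]
      rw [hss]
      have hk2 := key (-p)
      have habs : |s0 - -p| = -(s0 + p) := by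
        rw [show s0 - -p = s0 + p by ring]
        exact abs_of_neg (by linarith)
      rw [habs] at hk2
      have : -(s0 + p) * N ≤ L := by nlinarith
      linarith
  · have hss : s = q := by
      rw [hs, max_eq_right (by linarith : -p ≤ s0), min_eq_left h1.le]
    rw [hss]
    have hk2 := key q
    have habs : |s0 - q| = s0 - q := abs_of_pos (by linarith)
    rw [habs] at hk2
    have : (s0 - q) * N ≤ L := by nlinarith
    linarith

/-- Core construction, favorable-direction case. -/
lemma core_pos (A B N L p q m : ℝ) (hA0 : 0 < A) (hAB : A ≤ B) (hN : 0 < N)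
    (hL0 : 0 ≤ L) (hp : 0 ≤ p) (hq : 0 ≤ q)
    (hpq : 1 - 2 * L ≤ (p + q) * N)
    (hBp : B * p ≤ L - m) (hAq : A * q ≤ L - m) (hbq : B * q ≤ L) (hmL : m ≤ L)
    (w1 w2 w3 : ℝ) (h1 : dni w1 ≤ m) (h2 : ∃ r : ℤ, 0 ≤ w2 - r ∧ w2 - r ≤ m) :
    ∃ s : ℝ, dni (w1 - s * A) ≤ L ∧ dni (w2 - s * B) ≤ L ∧ dni (w3 - s * N) ≤ L := by
  obtain ⟨r, hr0, hrm⟩ := h2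
  have hB0 : 0 < B := lt_of_lt_of_le hA0 hAB
  obtain ⟨s, hsp, hsq, hs3⟩ := exists_s N L p q w3 hN hL0 (by linarith) hpq
  refine ⟨s, ?_, ?_, hs3⟩
  · have hlip : dni (w1 - s * A) ≤ dni w1 + |s| * A := by
      have hl := dni_lip (w1 - s * A) w1
      have habs : |w1 - s * A - w1| = |s| * A := by
        rw [show w1 - s * A - w1 = -(s * A) by ring, abs_neg, abs_mul, abs_of_pos hA0]
      rw [habs] at hl
      exact hl
    have hsA : |s| * A ≤ L - m := by
      rcases le_or_gt 0 s with h | h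
      · rw [abs_of_nonneg h]
        calc s * A = A * s := by ring
          _ ≤ A * q := mul_le_mul_of_nonneg_left hsq hA0.le
          _ ≤ L - m := hAq
      · rw [abs_of_neg h]
        calc -s * A = A * (-s) := by ring
          _ ≤ B * (-s) := mul_le_mul_of_nonneg_right hAB (by linarith)
          _ ≤ B * p := mul_le_mul_of_nonneg_left (by linarith) hB0.le
          _ ≤ L - m := hBp
    linarith
  · have heq : w2 - s * B = (w2 - r - s * B) + (r : ℝ) := by ring
    rw [heq, dni_add_int]
    have hle : dni (w2 - r - s * B) ≤ |(w2 - r) - s * B| := dni_le_abs _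
    rcases le_or_gt 0 s with h | h
    · have hsB : s * B ≤ L := by
        calc s * B = B * s := by ring
          _ ≤ B * q := mul_le_mul_of_nonneg_left hsq hB0.le
          _ ≤ L := hbq
      rcases abs_cases ((w2 - r) - s * B) with ⟨he, _⟩ | ⟨he, _⟩
      · rw [he] at hle
        have : 0 ≤ s * B := mul_nonneg h hB0.le
        linarith
      · rw [he] at hle
        linarith
    · have habs : |(w2 - r) - s * B| = (w2 - r) - s * B := by
        apply abs_of_nonneg
        have : 0 ≤ -s * B := mul_nonneg (by linarith) hB0.le
        linarith
      rw [habs] at hle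
      have : -s * B ≤ L - m := by
        calc -s * B = B * (-s) := by ring
          _ ≤ B * p := mul_le_mul_of_nonneg_left (by linarith) hB0.le
          _ ≤ L - m := hBp
      linarith

/-- Core construction: both directions. -/
lemma core (A B N L p q m : ℝ) (hA0 : 0 < A) (hAB : A ≤ B) (hN : 0 < N)
    (hL0 : 0 ≤ L) (hp : 0 ≤ p) (hq : 0 ≤ q)
    (hpq : 1 - 2 * L ≤ (p + q) * N)
    (hBp : B * p ≤ L - m) (hAq : A * q ≤ L - m) (hbq : B * q ≤ L) (hmL : m ≤ L)
    (w1 w2 w3 : ℝ) (h1 : dni w1 ≤ m) (h2 : dni w2 ≤ m) :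
    ∃ s : ℝ, dni (w1 - s * A) ≤ L ∧ dni (w2 - s * B) ≤ L ∧ dni (w3 - s * N) ≤ L := by
  rcases le_or_gt 0 (w2 - round w2) with hsgn | hsgn
  · refine core_pos A B N L p q m hA0 hAB hN hL0 hp hq hpq hBp hAq hbq hmL w1 w2 w3 h1
      ⟨round w2, hsgn, ?_⟩
    calc w2 - round w2 ≤ |w2 - round w2| := le_abs_self _
      _ ≤ m := h2
  · have hneg : 0 ≤ -w2 - ((-round w2 : ℤ) : ℝ) := by push_cast; linarith
    have hnegm : -w2 - ((-round w2 : ℤ) : ℝ) ≤ m := by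
      push_cast
      calc -w2 - -(round w2 : ℝ) = -(w2 - round w2) := by ring
        _ = |w2 - round w2| := (abs_of_neg hsgn).symm
        _ ≤ m := h2
    obtain ⟨s, c1, c2, c3⟩ :=
      core_pos A B N L p q m hA0 hAB hN hL0 hp hq hpq hBp hAq hbq hmL (-w1) (-w2) (-w3)
        (by rwa [dni_neg]) ⟨-round w2, hneg, hnegm⟩
    refine ⟨-s, ?_, ?_, ?_⟩
    · rw [show w1 - -s * A = -(-w1 - s * A) by ring, dni_neg]; exact c1
    · rw [show w2 - -s * B = -(-w2 - s * B) by ring, dni_neg]; exact c2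
    · rw [show w3 - -s * N = -(-w3 - s * N) by ring, dni_neg]; exact c3

theorem Ple (A B : ℝ) (h1 : 1 ≤ A) (h2 : A + 1 ≤ B) :
    (B*(2*B^2+A*B-2*B-A^2))^2 + B*(2*B^2+A*B-2*B-A^2)*(A+B)*(A^2-A*B-3*B^2)
      + (A+B)^2*(A^2*B-3*A*B^2) ≤ 0 := by
  have hA : (0:ℝ) < A := by linarith
  have hB : (0:ℝ) < B := by linarith
  have hAB : A ≤ B := by linarith
  nlinarith [mul_nonneg (mul_nonneg (sub_nonneg.2 (pow_le_pow_left₀ hA.le hAB 3)) (sq_nonneg B)) (le_of_lt hB),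
    mul_nonneg (mul_nonneg (sub_nonneg.2 (pow_le_pow_left₀ hA.le hAB 2)) (mul_nonneg hA.le (sq_nonneg B))) (le_of_lt hB),
    mul_nonneg (mul_nonneg (sub_nonneg.2 (pow_le_pow_left₀ hA.le hAB 3)) (mul_nonneg hA.le hB.le)) (le_of_lt hB),
    mul_nonneg (mul_nonneg (sub_nonneg.2 (pow_le_pow_left₀ hA.le hAB 3)) hA.le) hB.le,
    mul_nonneg (mul_nonneg (by linarith : (0:ℝ) ≤ B - 2) (mul_nonneg hB.le (sq_nonneg B))) hB.le,
    mul_nonneg (mul_nonneg (by linarith : (0:ℝ) ≤ B - 1) (mul_nonneg hA.le (mul_nonneg hB.le (sq_nonneg B)))) hB.le,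
    mul_pos hA hB, sq_nonneg (A-B), sq_nonneg (A*B - B^2)]

theorem keyineq (A B N : ℝ) (h1 : 1 ≤ A) (h2 : A + 1 ≤ B) (h3 : B + 1 ≤ N)
    (hn : (3*B - A) * (A*N + B*N + A*B) ≤ N^2 + A*B*N) :
    2*B^2*(A+B-1) ≤ (N + A*B)*(A+B) := by
  have hA : (0:ℝ) < A := by linarith
  have hB : (0:ℝ) < B := by linarith
  have hN : (0:ℝ) < N := by linarith
  by_cases hC : 2*B^2+A*B-2*B-A^2 ≤ 0
  · nlinarith [mul_pos hN (by linarith : (0:ℝ) < A+B), mul_nonneg hB.le (neg_nonneg.2 hC)]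
  · push_neg at hC
    by_contra h
    push_neg at h
    have hx : N*(A+B) < B*(2*B^2+A*B-2*B-A^2) := by nlinarith
    have hP := Ple A B h1 h2
    have hxpos : 0 < N*(A+B) := mul_pos hN (by linarith)
    have hTx : 0 < B*(2*B^2+A*B-2*B-A^2) - N*(A+B) := by linarith
    have h4 : (0:ℝ) < (A+B)^2 := by positivity
    have hFneg : 0 < -((A+B)^2*(A^2*B-3*A*B^2)) := by
      nlinarith [mul_pos h4 (mul_pos (mul_pos hA hB) (show (0:ℝ) < 3*B-A by linarith))]
    nlinarith [mul_nonneg hxpos.le (neg_nonneg.2 hP),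
      mul_pos hTx (mul_pos hxpos (mul_pos hB (by positivity : (0:ℝ) < 2*B^2+A*B-2*B-A^2))),
      mul_pos hTx hFneg,
      mul_nonneg (mul_nonneg (mul_nonneg hB.le hC.le) (sq_nonneg (A+B)))
        (by nlinarith : (0:ℝ) ≤ N^2 + A*B*N - (3*B-A)*(A*N+B*N+A*B))]

theorem numeric (A B N : ℝ) (h1 : 1 ≤ A) (h2 : A + 1 ≤ B) (h3 : B + 1 ≤ N)
    (hn : (3*B - A) * (A*N + B*N + A*B) ≤ N^2 + A*B*N) :
    ∃ L M p q : ℝ,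
      L = (N + A*B) / (2*(A*N + B*N + A*B)) ∧ M = 1/(A+B) - L ∧
      0 ≤ L ∧ 0 ≤ p ∧ 0 ≤ q ∧ 1 - 2*L ≤ (p+q)*N ∧
      B*p ≤ L - M ∧ A*q ≤ L - M ∧ B*q ≤ L ∧ M ≤ L := by
  have hA : (0:ℝ) < A := by linarith
  have hB : (0:ℝ) < B := by linarith
  have hN : (0:ℝ) < N := by linarith
  have hAB : (0:ℝ) < A + B := by linarith
  have hE : (0:ℝ) < 2*(A*N + B*N + A*B) := by positivity
  have hab1 : (0:ℝ) ≤ A + B - 1 := by linarith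
  have hkey := keyineq A B N h1 h2 h3 hn
  refine ⟨(N + A*B) / (2*(A*N + B*N + A*B)),
    1/(A+B) - (N + A*B) / (2*(A*N + B*N + A*B)),
    2*A*(A+B-1) / ((2*(A*N + B*N + A*B))*(A+B)),
    2*B*(A+B-1) / ((2*(A*N + B*N + A*B))*(A+B)),
    rfl, rfl, by positivity, ?_, ?_, ?_, ?_, ?_, ?_, ?_⟩
  · exact div_nonneg (by nlinarith) (by positivity)
  · exact div_nonneg (by nlinarith) (by positivity)
  · -- 1 - 2L ≤ (p+q)*N, in fact equality
    have : (2*A*(A+B-1) / ((2*(A*N + B*N + A*B))*(A+B)) +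
        2*B*(A+B-1) / ((2*(A*N + B*N + A*B))*(A+B))) * N
        = 1 - 2*((N + A*B) / (2*(A*N + B*N + A*B))) := by
      field_simp
      ring
    linarith [this]
  · -- B*p ≤ L - M, in fact equality
    have : B * (2*A*(A+B-1) / ((2*(A*N + B*N + A*B))*(A+B)))
        = (N + A*B) / (2*(A*N + B*N + A*B)) -
          (1/(A+B) - (N + A*B) / (2*(A*N + B*N + A*B))) := by
      field_simp
      ring
    linarith [this]
  · have : A * (2*B*(A+B-1) / ((2*(A*N + B*N + A*B))*(A+B)))
        = (N + A*B) / (2*(A*N + B*N + A*B)) -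
          (1/(A+B) - (N + A*B) / (2*(A*N + B*N + A*B))) := by
      field_simp
      ring
    linarith [this]
  · -- B*q ≤ L
    rw [show B * (2*B*(A+B-1) / ((2*(A*N + B*N + A*B))*(A+B))) =
      (2*B^2*(A+B-1)) / ((2*(A*N + B*N + A*B))*(A+B)) by ring]
    rw [div_le_div_iff₀ (by positivity) hE]
    nlinarith [mul_le_mul_of_nonneg_right hkey hE.le]
  · -- M ≤ L
    have heq : 2*((N + A*B) / (2*(A*N + B*N + A*B))) - 1/(A+B)
        = (2*A*B*(A+B-1)) / ((2*(A*N + B*N + A*B))*(A+B)) := by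
      field_simp
      ring
    have hnn : 0 ≤ (2*A*B*(A+B-1)) / ((2*(A*N + B*N + A*B))*(A+B)) :=
      div_nonneg (mul_nonneg (by positivity) hab1) (by positivity)
    linarith

theorem stmt_9 (a b n : ℕ) (ha : 0 < a) (hab : a < b) (hbn : b < n)
    (hcop : Nat.Coprime a b)
    (hn : (3 * (b : ℝ) - a) / (2 * n) ≤ (n + a * b) / (2 * (a * n + b * n + a * b)))
    (t1 t2 : ℝ)
    (hmu : mu2 a b t1 t2 ≤ 1 / (a + b) - (n + a * b) / (2 * (a * n + b * n + a * b))) :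
    ∀ t3 : ℝ, mu3 a b n t1 t2 t3 ≤ ((n : ℝ) + a * b) / (2 * (a * n + b * n + a * b)) := by
  intro t3
  have h1 : (1 : ℝ) ≤ (a : ℝ) := by exact_mod_cast ha
  have h2 : (a : ℝ) + 1 ≤ (b : ℝ) := by exact_mod_cast hab
  have h3 : (b : ℝ) + 1 ≤ (n : ℝ) := by exact_mod_cast hbn
  have hA0 : (0 : ℝ) < a := by linarith
  have hN0 : (0 : ℝ) < n := by linarith
  have hE : (0:ℝ) < 2*((a:ℝ)*n + (b:ℝ)*n + (a:ℝ)*b) := by positivity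
  have hn' : (3*(b:ℝ) - a) * ((a:ℝ)*n + (b:ℝ)*n + (a:ℝ)*b) ≤ (n:ℝ)^2 + (a:ℝ)*b*n := by
    rw [div_le_div_iff₀ (by positivity) hE] at hn
    nlinarith [hn]
  obtain ⟨L, M, p, q, hL, hM, hL0, hp, hq, hpq, hBp, hAq, hbq, hML⟩ :=
    numeric (a:ℝ) (b:ℝ) (n:ℝ) h1 h2 h3 hn'
  have hmu' : mu2 a b t1 t2 ≤ M := by rw [hM, hL]; exact hmu
  have goalL : mu3 a b n t1 t2 t3 ≤ L := by
    apply le_of_forall_sub_le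
    intro ε hε
    have hmuM : mu2 a b t1 t2 < M + ε := lt_of_le_of_lt hmu' (by linarith)
    rw [mu2] at hmuM
    obtain ⟨x₀, hx₀⟩ := exists_lt_of_ciInf_lt hmuM
    have hd1 : dni (t1 - x₀ * a) ≤ M + ε :=
      le_of_lt (lt_of_le_of_lt (le_max_left _ _) hx₀)
    have hd2 : dni (t2 - x₀ * b) ≤ M + ε :=
      le_of_lt (lt_of_le_of_lt (le_max_right _ _) hx₀)
    obtain ⟨s, c1, c2, c3⟩ := core (a:ℝ) (b:ℝ) (n:ℝ) (L + ε) p q (M + ε) hA0 (by linarith)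
      hN0 (by linarith) hp hq (by linarith) (by linarith) (by linarith) (by linarith)
      (by linarith) (t1 - x₀ * a) (t2 - x₀ * b) (t3 - x₀ * n) hd1 hd2
    have hbdd : BddBelow (Set.range fun x : ℝ =>
        max (dni (t1 - x * a)) (max (dni (t2 - x * b)) (dni (t3 - x * n)))) := by
      refine ⟨0, ?_⟩
      rintro y ⟨x', rfl⟩
      exact le_trans (dni_nonneg _) (le_max_left _ _)
    have hle : mu3 a b n t1 t2 t3 ≤
        max (dni (t1 - (x₀ + s) * a))
          (max (dni (t2 - (x₀ + s) * b)) (dni (t3 - (x₀ + s) * n))) := by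
      rw [mu3]
      exact ciInf_le hbdd (x₀ + s)
    have e1 : t1 - (x₀ + s) * (a:ℝ) = (t1 - x₀ * a) - s * a := by ring
    have e2 : t2 - (x₀ + s) * (b:ℝ) = (t2 - x₀ * b) - s * b := by ring
    have e3 : t3 - (x₀ + s) * (n:ℝ) = (t3 - x₀ * n) - s * n := by ring
    rw [e1, e2, e3] at hle
    have : mu3 a b n t1 t2 t3 ≤ L + ε := le_trans hle (max_le c1 (max_le c2 c3))
    linarith
  rw [hL] at goalL
  exact goalL
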